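/- Let F be an orthogonally invariant class of nonsingular n×n real matrices, let ε > 0, and let k ≥ 0. Suppose there exists an algorithm φ : ℝ^n × (ℝ^n)^k → ℝ^n using Krylov information of cardinality k such that ‖A φ(b, Ab, …, A^k b) − b‖ ≤ ε for every A ∈ F and every b ∈ ℝ^n with ‖b‖ = 1. Then the minimal residual algorithm with one more step achieves error ε: for every A ∈ F and every b with ‖b‖ = 1, min over x ∈ span{b, Ab, …, A^k b} of ‖Ax − b‖ ≤ ε. That is, for any orthogonally invariant class F, the minimal residual algorithm requires at most one more Krylov step than the best algorithm using Krylov information: m^Kr(ε) ≤ m^Kr(ε, φ^mr) ≤ m^Kr(ε) + 1. -/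

import Mathlib

open Matrix

/-- The Euclidean norm on `ℝ^n`. -/
noncomputable def euclNorm {n : ℕ} (v : Fin n → ℝ) : ℝ := Real.sqrt (∑ i, v i ^ 2)

set_option linter.unusedVariables false

namespace Stmt9Aux

variable {n : ℕ}

noncomputable def toE {n : ℕ} : (Fin n → ℝ) ≃ₗ[ℝ] EuclideanSpace ℝ (Fin n) :=
  (WithLp.linearEquiv 2 ℝ (Fin n → ℝ)).symm

lemma toE_apply (v : Fin n → ℝ) (i : Fin n) : toE v i = v i := rfl

lemma euclNorm_eq (v : Fin n → ℝ) : euclNorm v = ‖toE v‖ := by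
  rw [EuclideanSpace.norm_eq, euclNorm]
  congr 1
  refine Finset.sum_congr rfl fun i _ => ?_
  rw [toE_apply, Real.norm_eq_abs, sq_abs]

lemma inner_toE (u v : Fin n → ℝ) : (inner ℝ (toE u) (toE v) : ℝ) = ∑ i, u i * v i := by
  rw [PiLp.inner_apply]
  exact Finset.sum_congr rfl fun i _ => by simp [toE_apply, mul_comm]

/-- The Householder-type reflection matrix negating `z` and fixing `z ⊥`. -/
noncomputable def refl (z : Fin n → ℝ) : Matrix (Fin n) (Fin n) ℝ :=
  1 - (2 / ∑ i, z i ^ 2) • vecMulVec z z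

lemma refl_transpose (z : Fin n → ℝ) : (refl z)ᵀ = refl z := by
  simp only [refl, transpose_sub, transpose_one, transpose_smul]
  congr 1
  congr 1
  ext i j
  simp [vecMulVec, mul_comm]

lemma refl_mulVec (z v : Fin n → ℝ) :
    (refl z).mulVec v = v - ((2 / ∑ i, z i ^ 2) * ∑ i, z i * v i) • z := by
  ext i
  simp only [refl, sub_mulVec, one_mulVec, smul_mulVec, Pi.sub_apply, Pi.smul_apply,
    smul_eq_mul]
  congr 1
  rw [mul_assoc]
  congr 1
  simp only [mulVec, dotProduct, vecMulVec_apply]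
  rw [Finset.sum_mul]
  refine Finset.sum_congr rfl fun j _ => ?_
  ring

lemma refl_mulVec_of_orth (z v : Fin n → ℝ) (h : ∑ i, z i * v i = 0) :
    (refl z).mulVec v = v := by
  rw [refl_mulVec, h]; simp

lemma vecMulVec_mul_vecMulVec (z : Fin n → ℝ) :
    vecMulVec z z * vecMulVec z z = (∑ i, z i ^ 2) • vecMulVec z z := by
  ext i j
  simp only [mul_apply, vecMulVec_apply, Matrix.smul_apply, smul_eq_mul]
  rw [Finset.sum_mul]
  refine Finset.sum_congr rfl fun l _ => ?_
  ring

lemma refl_mul_refl (z : Fin n → ℝ) (hz : z ≠ 0) : refl z * refl z = 1 := by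
  have hS : (∑ i, z i ^ 2) ≠ 0 := by
    intro h
    apply hz
    have : ∀ i ∈ Finset.univ, z i ^ 2 = 0 := by
      intro i _
      exact (Finset.sum_eq_zero_iff_of_nonneg (fun i _ => sq_nonneg (z i))).mp h i (Finset.mem_univ i)
    funext i
    exact sq_eq_zero_iff.mp (this i (Finset.mem_univ i))
  set c := 2 / ∑ i, z i ^ 2 with hc
  set M := vecMulVec z z with hM
  have hMM : (c • M) * (c • M) = (c * c * ∑ i, z i ^ 2) • M := by
    rw [smul_mul_smul_comm, vecMulVec_mul_vecMulVec, smul_smul]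
  have hcS : c * c * ∑ i, z i ^ 2 = c + c := by
    have h2 : c * ∑ i, z i ^ 2 = 2 := by rw [hc]; exact div_mul_cancel₀ 2 hS
    rw [mul_assoc, h2]; ring
  rw [refl, ← hc, ← hM, sub_mul, mul_sub, mul_sub, one_mul, mul_one, hMM, hcS, add_smul]
  simp

lemma reflT_mul_refl (z : Fin n → ℝ) (hz : z ≠ 0) : (refl z)ᵀ * refl z = 1 := by
  rw [refl_transpose, refl_mul_refl z hz]

lemma mulVec_dotProduct_self (Q : Matrix (Fin n) (Fin n) ℝ) (h : Qᵀ * Q = 1) (v : Fin n → ℝ) :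
    (Q.mulVec v) ⬝ᵥ (Q.mulVec v) = v ⬝ᵥ v := by
  rw [dotProduct_mulVec, ← mulVec_transpose, mulVec_mulVec, h, one_mulVec]

lemma euclNorm_mulVec (Q : Matrix (Fin n) (Fin n) ℝ) (h : Qᵀ * Q = 1) (v : Fin n → ℝ) :
    euclNorm (Q.mulVec v) = euclNorm v := by
  have := mulVec_dotProduct_self Q h v
  simp only [dotProduct] at this
  unfold euclNorm
  congr 1
  calc ∑ i, Q.mulVec v i ^ 2 = ∑ i, Q.mulVec v i * Q.mulVec v i := by
        refine Finset.sum_congr rfl fun i _ => sq (Q.mulVec v i) ▸ by ring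
    _ = ∑ i, v i * v i := this
    _ = ∑ i, v i ^ 2 := by refine Finset.sum_congr rfl fun i _ => by ring

end Stmt9Aux

open Stmt9Aux in
/-- **The minimal residual algorithm loses at most one Krylov step.**
Let `F` be an orthogonally invariant class of nonsingular `n × n` matrices.  If some
algorithm `φ` using Krylov information `[b, Ab, …, A^k b]` achieves residual at most
`ε` for every `A ∈ F` and every unit vector `b`, then for every such `A, b` there is
a vector in the Krylov subspace `span{b, Ab, …, A^k b}` (one more power, i.e. one more
step of the mr algorithm) whose residual is at most `ε`. -/
theorem stmt_9 (n k : ℕ) (F : Set (Matrix (Fin n) (Fin n) ℝ))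
    (hFns : ∀ A ∈ F, IsUnit A)
    (hFoi : ∀ A ∈ F, ∀ Q : Matrix (Fin n) (Fin n) ℝ, Qᵀ * Q = 1 → Qᵀ * A * Q ∈ F)
    (ε : ℝ) (hε : 0 < ε)
    (φ : (Fin n → ℝ) × (Fin k → (Fin n → ℝ)) → (Fin n → ℝ))
    (hφ : ∀ A ∈ F, ∀ b : Fin n → ℝ, euclNorm b = 1 →
      euclNorm (A.mulVec (φ (b, fun i => (A ^ ((i : ℕ) + 1)).mulVec b)) - b) ≤ ε) :
    ∀ A ∈ F, ∀ b : Fin n → ℝ, euclNorm b = 1 →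
      ∃ x ∈ Submodule.span ℝ (Set.range fun i : Fin (k + 1) => (A ^ (i : ℕ)).mulVec b),
        euclNorm (A.mulVec x - b) ≤ ε := by
  intro A hA b hb
  classical
  set x := φ (b, fun i => (A ^ ((i : ℕ) + 1)).mulVec b) with hx
  set f : Fin (k + 1) → (Fin n → ℝ) := fun i => (A ^ (i : ℕ)).mulVec b with hf
  set K : Submodule ℝ (EuclideanSpace ℝ (Fin n)) :=
    Submodule.span ℝ (⇑(toE (n := n)) '' Set.range f) with hK
  haveI : FiniteDimensional ℝ K :=
    FiniteDimensional.span_of_finite ℝ ((Set.finite_range f).image _)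
  obtain ⟨y', hy', z', hz', hxyz⟩ := K.exists_add_mem_mem_orthogonal (toE x)
  set y := (toE (n := n)).symm y' with hy
  set z := (toE (n := n)).symm z' with hzdef
  have hy'e : toE y = y' := by simp [hy]
  have hz'e : toE z = z' := by simp [hzdef]
  have hyK : y ∈ Submodule.span ℝ (Set.range f) := by
    have h1 : y' ∈ Submodule.map (toE (n := n) : (Fin n → ℝ) →ₗ[ℝ] EuclideanSpace ℝ (Fin n)) (Submodule.span ℝ (Set.range f)) := by
      rw [← Submodule.span_image]; exact hy'
    obtain ⟨u, hu, hu2⟩ := h1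
    have : y = u := by rw [hy, ← hu2]; simp
    rwa [this]
  have hxsum : x = y + z := by
    apply (toE (n := n)).injective
    rw [map_add, hy'e, hz'e, hxyz]
  -- orthogonality to generators
  have horthf : ∀ i : Fin (k + 1), ∑ j, z j * f i j = 0 := by
    intro i
    have hm : toE (f i) ∈ K := Submodule.subset_span ⟨f i, Set.mem_range_self i, rfl⟩
    have := (Submodule.mem_orthogonal K z').mp hz' _ hm
    rw [← hz'e, inner_toE] at this
    rw [← this]
    exact Finset.sum_congr rfl fun j _ => mul_comm _ _
  have horthy : ∑ j, z j * y j = 0 := by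
    have := (Submodule.mem_orthogonal K z').mp hz' _ hy'
    rw [← hz'e, ← hy'e, inner_toE] at this
    rw [← this]
    exact Finset.sum_congr rfl fun j _ => mul_comm _ _
  by_cases hzz : z = 0
  · refine ⟨x, ?_, hφ A hA b hb⟩
    rw [hxsum, hzz, add_zero]
    exact hyK
  -- main case
  set S := ∑ i, z i ^ 2 with hS
  have hSpos : 0 < S := by
    rcases Function.ne_iff.mp hzz with ⟨i, hi⟩
    have : 0 < z i ^ 2 := (sq_abs (z i)) ▸ pow_pos (abs_pos.mpr hi) 2
    exact this.trans_le (Finset.single_le_sum (f := fun j => z j ^ 2)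
      (fun j _ => sq_nonneg (z j)) (Finset.mem_univ i))
  set Q := Stmt9Aux.refl z with hQdef
  have hQ : Qᵀ * Q = 1 := reflT_mul_refl z hzz
  have hQsym : Qᵀ = Q := refl_transpose z
  have hQQ : Q * Q = 1 := refl_mul_refl z hzz
  have hQf : ∀ i : Fin (k + 1), Q.mulVec (f i) = f i := fun i =>
    refl_mulVec_of_orth z (f i) (horthf i)
  have hQb : Q.mulVec b = b := by
    have := hQf 0
    simpa [hf, Matrix.one_mulVec] using this
  have hQF : Qᵀ * A * Q ∈ F := hFoi A hA Q hQ
  have hpow : ∀ m : ℕ, (Qᵀ * A * Q) ^ (m + 1) = Qᵀ * A ^ (m + 1) * Q := by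
    intro m
    induction m with
    | zero => simp
    | succ m ih =>
      rw [pow_succ, ih, hQsym, pow_succ]
      simp only [mul_assoc]
      rw [← mul_assoc Q Q (A * Q), hQQ, one_mul]
      simp only [pow_succ, mul_assoc]
  have hinfo : (fun i : Fin k => ((Qᵀ * A * Q) ^ ((i : ℕ) + 1)).mulVec b)
      = fun i : Fin k => (A ^ ((i : ℕ) + 1)).mulVec b := by
    funext i
    have hlt : (i : ℕ) + 1 < k + 1 := Nat.succ_lt_succ i.isLt
    rw [hpow, hQsym, ← Matrix.mulVec_mulVec, ← Matrix.mulVec_mulVec, hQb]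
    have := hQf ⟨(i : ℕ) + 1, hlt⟩
    simpa [hf] using this
  have hres1 : euclNorm ((Qᵀ * A * Q).mulVec x - b) ≤ ε := by
    have := hφ (Qᵀ * A * Q) hQF b hb
    rwa [hinfo, ← hx] at this
  have hQx : Q.mulVec x = y - z := by
    rw [refl_mulVec, ← hS]
    have hsum : ∑ i, z i * x i = S := by
      rw [hxsum]
      simp only [Pi.add_apply, mul_add, Finset.sum_add_distrib]
      rw [horthy, zero_add, hS]
      exact Finset.sum_congr rfl fun j _ => by ring
    rw [hsum, div_mul_cancel₀ _ (ne_of_gt hSpos)]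
    rw [hxsum]
    ext i
    simp
    ring
  have hres2 : euclNorm (A.mulVec (y - z) - b) ≤ ε := by
    have heq : (Qᵀ * A * Q).mulVec x - b = Q.mulVec (A.mulVec (y - z) - b) := by
      rw [hQsym, ← Matrix.mulVec_mulVec, ← Matrix.mulVec_mulVec, hQx]
      conv_rhs => rw [Matrix.mulVec_sub, hQb]
    rw [heq, euclNorm_mulVec Q hQ] at hres1
    exact hres1
  have hres3 : euclNorm (A.mulVec (y + z) - b) ≤ ε := by
    rw [← hxsum]
    exact hφ A hA b hb
  refine ⟨y, hyK, ?_⟩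
  have hmid : A.mulVec y - b
      = (1 / 2 : ℝ) • ((A.mulVec (y + z) - b) + (A.mulVec (y - z) - b)) := by
    funext i
    simp [Matrix.mulVec_add, Matrix.mulVec_sub]
    ring
  calc euclNorm (A.mulVec y - b)
      = ‖(1 / 2 : ℝ) • (toE (A.mulVec (y + z) - b) + toE (A.mulVec (y - z) - b))‖ := by
        rw [hmid, euclNorm_eq, _root_.map_smul, map_add]
    _ ≤ (1 / 2 : ℝ) * (‖toE (A.mulVec (y + z) - b)‖ + ‖toE (A.mulVec (y - z) - b)‖) := by
        rw [norm_smul]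
        simp only [norm_div, Real.norm_ofNat, norm_one]
        have := norm_add_le (toE (A.mulVec (y + z) - b)) (toE (A.mulVec (y - z) - b))
        nlinarith [norm_nonneg (toE (A.mulVec (y + z) - b) + toE (A.mulVec (y - z) - b))]
    _ ≤ (1 / 2 : ℝ) * (ε + ε) := by
        rw [← euclNorm_eq, ← euclNorm_eq]
        have h1 := hres3; have h2 := hres2
        nlinarith
    _ = ε := by ring
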